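/- Let ⦀·⦀ be a norm on ℝ^d. The following are equivalent: (i) ⦀·⦀ is orthant-monotonic; (ii) ⦀x⦀ = ⦀x⦀^top_d for all x ∈ ℝ^d (the norm coincides with its generalized top-d norm); (iii) ⦀y⦀⋆ = ⦀y⦀^supp_d for all y ∈ ℝ^d (the dual norm coincides with the generalized d-support norm). -/

import Mathlib

open Finset Set

namespace OSMPaper

variable {d : ℕ}

/-- Standard inner product on `ℝ^d = Fin d → ℝ`. -/
def dot (x y : Fin d → ℝ) : ℝ := ∑ i, x i * y i

/-- `N` is a norm on `ℝ^d`. -/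
def IsNorm (N : (Fin d → ℝ) → ℝ) : Prop :=
  (∀ x, 0 ≤ N x) ∧ (∀ x, N x = 0 ↔ x = 0) ∧
  (∀ (c : ℝ) (x : Fin d → ℝ), N (c • x) = |c| * N x) ∧
  (∀ x y, N (x + y) ≤ N x + N y)

/-- `proj K x = x_K`, the vector coinciding with `x` on `K` and zero outside `K`. -/
def proj (K : Finset (Fin d)) (x : Fin d → ℝ) : Fin d → ℝ :=
  fun i => if i ∈ K then x i else 0

/-- The coordinate subspace `ℝ_K`. -/
def coordSubspace (K : Finset (Fin d)) : Set (Fin d → ℝ) :=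
  {x | ∀ j, j ∉ K → x j = 0}

/-- Orthant-monotonic norm. -/
def OrthantMonotonic (N : (Fin d → ℝ) → ℝ) : Prop :=
  ∀ x x' : Fin d → ℝ, (∀ i, |x i| ≤ |x' i|) → (∀ i, 0 ≤ x i * x' i) → N x ≤ N x'

/-- Orthant-strictly monotonic norm. -/
def OrthantStrictlyMonotonic (N : (Fin d → ℝ) → ℝ) : Prop :=
  ∀ x x' : Fin d → ℝ, (∀ i, |x i| ≤ |x' i|) → (∃ j, |x j| < |x' j|) →
    (∀ i, 0 ≤ x i * x' i) → N x < N x'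

/-- Dual norm `⦀y⦀⋆ = sup_{N x ≤ 1} ⟨x, y⟩`. -/
noncomputable def dualNorm (N : (Fin d → ℝ) → ℝ) (y : Fin d → ℝ) : ℝ :=
  sSup {r | ∃ x, N x ≤ 1 ∧ r = dot x y}

/-- Support function of a set `S`. -/
noncomputable def suppFn (S : Set (Fin d → ℝ)) (y : Fin d → ℝ) : ℝ :=
  sSup {r | ∃ x ∈ S, r = dot x y}

/-- Generalized top-`k` norm associated with the source norm `N`. -/
noncomputable def topNorm (N : (Fin d → ℝ) → ℝ) (k : ℕ) (x : Fin d → ℝ) : ℝ :=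
  sSup {r | ∃ K : Finset (Fin d), K.card ≤ k ∧ r = N (proj K x)}

/-- Generalized `k`-support norm: the dual norm of the generalized top-`k` norm. -/
noncomputable def supportNorm (N : (Fin d → ℝ) → ℝ) (k : ℕ) : (Fin d → ℝ) → ℝ :=
  dualNorm (topNorm N k)

/-- The ℓ0 pseudonorm: the number of nonzero components. -/
noncomputable def l0 (x : Fin d → ℝ) : ℕ := Set.ncard {i | x i ≠ 0}

/-- `x` is an extreme point of the convex set `C`. -/
def ExtremePt (C : Set (Fin d → ℝ)) (x : Fin d → ℝ) : Prop :=
  x ∈ C ∧ ∀ y ∈ C, ∀ z ∈ C, ∀ t : ℝ, 0 < t → t < 1 →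
    x = t • y + (1 - t) • z → y = x ∧ z = x


section Aux

variable {N : (Fin d → ℝ) → ℝ}

lemma dot_comm (x y : Fin d → ℝ) : dot x y = dot y x :=
  Finset.sum_congr rfl fun i _ => mul_comm _ _

lemma dot_zero_right (x : Fin d → ℝ) : dot x 0 = 0 := by simp [dot]

lemma dot_zero_left (x : Fin d → ℝ) : dot 0 x = 0 := by simp [dot]

lemma IsNorm.zero' (hN : IsNorm N) : N 0 = 0 := (hN.2.1 0).mpr rfl

lemma IsNorm.pos (hN : IsNorm N) {x : Fin d → ℝ} (hx : x ≠ 0) : 0 < N x :=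
  lt_of_le_of_ne (hN.1 x) fun h => hx ((hN.2.1 x).mp h.symm)

lemma IsNorm.convex' (hN : IsNorm N) (a b : Fin d → ℝ) {t : ℝ} (h0 : 0 ≤ t) (h1 : t ≤ 1) :
    N (t • a + (1 - t) • b) ≤ t * N a + (1 - t) * N b := by
  calc N (t • a + (1 - t) • b) ≤ N (t • a) + N ((1 - t) • b) := hN.2.2.2 _ _
    _ = |t| * N a + |1 - t| * N b := by rw [hN.2.2.1, hN.2.2.1]
    _ = t * N a + (1 - t) * N b := by
        rw [abs_of_nonneg h0, abs_of_nonneg (by linarith : (0:ℝ) ≤ 1 - t)]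

lemma IsNorm.sum_le (hN : IsNorm N) {ι : Type*} (s : Finset ι) (f : ι → Fin d → ℝ) :
    N (∑ i ∈ s, f i) ≤ ∑ i ∈ s, N (f i) := by
  classical
  induction s using Finset.induction_on with
  | empty => simp [hN.zero']
  | insert _ _ ha ih =>
      rw [Finset.sum_insert ha, Finset.sum_insert ha]
      exact le_trans (hN.2.2.2 _ _) (by linarith)

lemma IsNorm.le_const_mul (hN : IsNorm N) (x : Fin d → ℝ) :
    N x ≤ (∑ i, N ((Pi.single i (1:ℝ) : Fin d → ℝ))) * ‖x‖ := by
  classical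
  have hx : x = ∑ i, x i • (Pi.single i (1:ℝ) : Fin d → ℝ) := by
    funext j
    simp [Pi.single_apply, Finset.sum_ite_eq', mul_comm]
  calc N x = N (∑ i, x i • (Pi.single i (1:ℝ) : Fin d → ℝ)) := by rw [← hx]
    _ ≤ ∑ i, N (x i • (Pi.single i (1:ℝ) : Fin d → ℝ)) := hN.sum_le _ _
    _ = ∑ i, |x i| * N ((Pi.single i (1:ℝ) : Fin d → ℝ)) := by
        refine Finset.sum_congr rfl fun i _ => ?_
        rw [hN.2.2.1]
    _ ≤ ∑ i, ‖x‖ * N ((Pi.single i (1:ℝ) : Fin d → ℝ)) := by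
        refine Finset.sum_le_sum fun i _ => ?_
        refine mul_le_mul_of_nonneg_right ?_ (hN.1 _)
        simpa [Real.norm_eq_abs] using norm_le_pi_norm x i
    _ = (∑ i, N ((Pi.single i (1:ℝ) : Fin d → ℝ))) * ‖x‖ := by
        rw [Finset.sum_mul]
        exact Finset.sum_congr rfl fun i _ => mul_comm _ _

lemma IsNorm.continuous (hN : IsNorm N) : Continuous N := by
  set C : ℝ := ∑ i, N ((Pi.single i (1:ℝ) : Fin d → ℝ)) with hC
  have hC0 : 0 ≤ C := Finset.sum_nonneg fun i _ => hN.1 _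
  have key : ∀ a b : Fin d → ℝ, N a - N b ≤ C * dist a b := by
    intro a b
    have h1 : N a ≤ N (a - b) + N b := by
      have := hN.2.2.2 (a - b) b
      simpa using this
    have h2 := hN.le_const_mul (a - b)
    rw [dist_eq_norm]
    linarith
  have : LipschitzWith C.toNNReal N := by
    apply LipschitzWith.of_dist_le_mul
    intro a b
    rw [Real.dist_eq, abs_sub_le_iff, Real.coe_toNNReal _ hC0]
    exact ⟨key a b, by rw [dist_comm]; exact key b a⟩
  exact this.continuous

lemma IsNorm.exists_lower (hd : 0 < d) (hN : IsNorm N) :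
    ∃ m : ℝ, 0 < m ∧ ∀ x, m * ‖x‖ ≤ N x := by
  have hcs : IsCompact (Metric.sphere (0 : Fin d → ℝ) 1) := isCompact_sphere 0 1
  have hne : (Metric.sphere (0 : Fin d → ℝ) 1).Nonempty := by
    refine ⟨Pi.single ⟨0, hd⟩ (1:ℝ), ?_⟩
    simp [mem_sphere_iff_norm, Pi.norm_single]
  obtain ⟨x₀, hx₀, hmin⟩ := hcs.exists_isMinOn hne hN.continuous.continuousOn
  have hx₀ne : x₀ ≠ 0 := by
    intro h
    rw [h, mem_sphere_iff_norm] at hx₀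
    simp at hx₀
  refine ⟨N x₀, hN.pos hx₀ne, fun x => ?_⟩
  rcases eq_or_ne x 0 with rfl | hx
  · simp [hN.zero']
  · have hnx : (0:ℝ) < ‖x‖ := norm_pos_iff.mpr hx
    have hmem : (‖x‖⁻¹ • x) ∈ Metric.sphere (0 : Fin d → ℝ) 1 := by
      rw [mem_sphere_iff_norm, sub_zero, norm_smul, norm_inv, norm_norm,
        inv_mul_cancel₀ hnx.ne']
    have h2 : N x₀ ≤ N (‖x‖⁻¹ • x) := hmin hmem
    rw [hN.2.2.1, abs_inv, abs_norm] at h2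
    have h3 := mul_le_mul_of_nonneg_right h2 hnx.le
    calc N x₀ * ‖x‖ ≤ ‖x‖⁻¹ * N x * ‖x‖ := h3
      _ = N x * (‖x‖⁻¹ * ‖x‖) := by ring
      _ = N x := by rw [inv_mul_cancel₀ hnx.ne', mul_one]

lemma IsNorm.bddAbove_dualSet (hd : 0 < d) (hN : IsNorm N) (y : Fin d → ℝ) :
    BddAbove {r | ∃ x, N x ≤ 1 ∧ r = dot x y} := by
  obtain ⟨m, hm, hml⟩ := hN.exists_lower hd
  refine ⟨m⁻¹ * ∑ i, |y i|, ?_⟩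
  rintro r ⟨x, hx, rfl⟩
  have hxn : ‖x‖ ≤ m⁻¹ := by
    have h1 := hml x
    rw [← le_div_iff₀' hm] at h1
    calc ‖x‖ ≤ N x / m := h1
      _ ≤ 1 / m := by gcongr
      _ = m⁻¹ := one_div m
  calc dot x y = ∑ i, x i * y i := rfl
    _ ≤ ∑ i, ‖x‖ * |y i| := by
        refine Finset.sum_le_sum fun i _ => ?_
        calc x i * y i ≤ |x i * y i| := le_abs_self _
          _ = |x i| * |y i| := abs_mul _ _
          _ ≤ ‖x‖ * |y i| := by
              refine mul_le_mul_of_nonneg_right ?_ (abs_nonneg _)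
              simpa [Real.norm_eq_abs] using norm_le_pi_norm x i
    _ = ‖x‖ * ∑ i, |y i| := by rw [Finset.mul_sum]
    _ ≤ m⁻¹ * ∑ i, |y i| := by
        refine mul_le_mul_of_nonneg_right hxn (Finset.sum_nonneg fun i _ => abs_nonneg _)

lemma IsNorm.zero_mem_dualSet (hN : IsNorm N) (y : Fin d → ℝ) :
    (0:ℝ) ∈ {r | ∃ x, N x ≤ 1 ∧ r = dot x y} :=
  ⟨0, by rw [hN.zero']; exact zero_le_one, (dot_zero_left y).symm⟩

lemma IsNorm.dualNorm_nonneg (hd : 0 < d) (hN : IsNorm N) (y : Fin d → ℝ) :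
    0 ≤ dualNorm N y :=
  le_csSup (hN.bddAbove_dualSet hd y) (hN.zero_mem_dualSet y)

lemma IsNorm.dot_le_mul_dual (hd : 0 < d) (hN : IsNorm N) (x y : Fin d → ℝ) :
    dot x y ≤ N x * dualNorm N y := by
  rcases eq_or_ne x 0 with rfl | hx
  · rw [dot_zero_left, hN.zero', zero_mul]
  · have hp : 0 < N x := hN.pos hx
    have hz : N ((N x)⁻¹ • x) = 1 := by
      rw [hN.2.2.1, abs_inv, abs_of_pos hp, inv_mul_cancel₀ hp.ne']
    have hmem : dot ((N x)⁻¹ • x) y ∈ {r | ∃ z, N z ≤ 1 ∧ r = dot z y} :=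
      ⟨_, le_of_eq hz, rfl⟩
    have h1 : dot ((N x)⁻¹ • x) y ≤ dualNorm N y :=
      le_csSup (hN.bddAbove_dualSet hd y) hmem
    have h2 : dot ((N x)⁻¹ • x) y = (N x)⁻¹ * dot x y := by
      simp [dot, Finset.mul_sum, mul_assoc]
    rw [h2] at h1
    have := mul_le_mul_of_nonneg_left h1 hp.le
    calc dot x y = N x * ((N x)⁻¹ * dot x y) := by
          rw [← mul_assoc, mul_inv_cancel₀ hp.ne', one_mul]
      _ ≤ N x * dualNorm N y := this

lemma IsNorm.coord_le_dual (hd : 0 < d) (hN : IsNorm N) (y : Fin d → ℝ) (j : Fin d) :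
    |y j| ≤ N (Pi.single j 1) * dualNorm N y := by
  classical
  set s : ℝ := if 0 ≤ y j then 1 else -1 with hs
  have hsy : s * y j = |y j| := by
    rcases le_or_gt 0 (y j) with h | h
    · rw [hs, if_pos h, one_mul, abs_of_nonneg h]
    · rw [hs, if_neg (not_le.mpr h), abs_of_neg h]; ring
  have h1 : dot (s • (Pi.single j (1:ℝ) : Fin d → ℝ)) y ≤ N (s • (Pi.single j (1:ℝ) : Fin d → ℝ)) * dualNorm N y :=
    hN.dot_le_mul_dual hd _ y
  have h2 : dot (s • (Pi.single j (1:ℝ) : Fin d → ℝ)) y = |y j| := by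
    rw [← hsy]
    simp [dot, Pi.single_apply, ite_mul, Finset.sum_ite_eq', mul_comm, mul_assoc]
  have h3 : N (s • (Pi.single j (1:ℝ) : Fin d → ℝ)) = N (Pi.single j 1) := by
    rw [hN.2.2.1]
    have : |s| = 1 := by
      rcases le_or_gt 0 (y j) with h | h
      · rw [hs, if_pos h]; simp
      · rw [hs, if_neg (not_le.mpr h)]; simp
    rw [this, one_mul]
  rw [h2, h3] at h1
  exact h1

lemma IsNorm.bddAbove_bidualSet (hd : 0 < d) (hN : IsNorm N) (x : Fin d → ℝ) :
    BddAbove {r | ∃ y, dualNorm N y ≤ 1 ∧ r = dot y x} := by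
  refine ⟨∑ j, N (Pi.single j 1) * |x j|, ?_⟩
  rintro r ⟨y, hy, rfl⟩
  calc dot y x = ∑ j, y j * x j := rfl
    _ ≤ ∑ j, N (Pi.single j 1) * |x j| := by
        refine Finset.sum_le_sum fun j _ => ?_
        calc y j * x j ≤ |y j * x j| := le_abs_self _
          _ = |y j| * |x j| := abs_mul _ _
          _ ≤ (N (Pi.single j 1) * dualNorm N y) * |x j| := by
              exact mul_le_mul_of_nonneg_right (hN.coord_le_dual hd y j) (abs_nonneg _)
          _ ≤ (N (Pi.single j 1) * 1) * |x j| := by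
              refine mul_le_mul_of_nonneg_right ?_ (abs_nonneg _)
              exact mul_le_mul_of_nonneg_left hy (hN.1 _)
          _ = N (Pi.single j 1) * |x j| := by rw [mul_one]

lemma IsNorm.dualNorm_zero_le_one (hN : IsNorm N) : dualNorm N (0 : Fin d → ℝ) ≤ 1 := by
  apply Real.sSup_le _ zero_le_one
  rintro r ⟨z, _, rfl⟩
  rw [dot_zero_right]
  exact zero_le_one

private lemma le_of_forall_div_le (s A : ℝ) (hs : 0 < s) (hA : 0 ≤ A)
    (h : ∀ δ : ℝ, 0 < δ → s / (1 + δ) ≤ A) : s ≤ A := by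
  by_contra hc
  push_neg at hc
  have hδ : 0 < (s - A) / (A + 1) := div_pos (by linarith) (by linarith)
  have h2 := h _ hδ
  rw [div_le_iff₀ (by positivity)] at h2
  have hA1 : (0:ℝ) < A + 1 := by linarith
  have h3 : A * (1 + (s - A) / (A + 1)) < s := by
    rw [mul_add, mul_one]
    have h4 : A * ((s - A) / (A + 1)) < s - A := by
      rw [← mul_div_assoc, div_lt_iff₀ hA1]
      nlinarith
    linarith
  linarith

lemma IsNorm.bidual (hd : 0 < d) (hN : IsNorm N) (x : Fin d → ℝ) :
    dualNorm (dualNorm N) x = N x := by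
  classical
  apply le_antisymm
  · apply Real.sSup_le _ (hN.1 x)
    rintro r ⟨y, hy, rfl⟩
    calc dot y x = dot x y := dot_comm y x
      _ ≤ N x * dualNorm N y := hN.dot_le_mul_dual hd x y
      _ ≤ N x * 1 := mul_le_mul_of_nonneg_left hy (hN.1 x)
      _ = N x := mul_one _
  · rcases eq_or_ne x 0 with rfl | hx
    · rw [hN.zero']
      exact le_csSup (hN.bddAbove_bidualSet hd 0)
        ⟨0, hN.dualNorm_zero_le_one, (dot_zero_left 0).symm⟩
    · set s : ℝ := N x with hsdef
      have hs : 0 < s := hN.pos hx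
      have hA : 0 ≤ dualNorm (dualNorm N) x :=
        le_csSup (hN.bddAbove_bidualSet hd x)
          ⟨0, hN.dualNorm_zero_le_one, (dot_zero_left x).symm⟩
      refine le_of_forall_div_le s _ hs hA ?_
      intro δ hδ
      -- separate p from the unit ball B
      set B : Set (Fin d → ℝ) := {z | N z ≤ 1} with hB
      have hBconv : Convex ℝ B := by
        intro z hz w hw a b ha hb hab
        have hb' : b = 1 - a := by linarith
        subst hb'
        calc N (a • z + (1 - a) • w) ≤ a * N z + (1 - a) * N w :=
              hN.convex' z w ha (by linarith)
          _ ≤ a * 1 + (1 - a) * 1 :=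
              add_le_add (mul_le_mul_of_nonneg_left hz ha)
                (mul_le_mul_of_nonneg_left hw (by linarith))
          _ = 1 := by ring
      have hBclosed : IsClosed B := IsClosed.preimage hN.continuous isClosed_Iic
      set p : Fin d → ℝ := ((1 + δ) * s⁻¹) • x with hp
      have hNp : N p = 1 + δ := by
        rw [hp, hN.2.2.1, abs_of_pos (by positivity), mul_assoc,
          inv_mul_cancel₀ hs.ne', mul_one]
      have hpB : p ∉ B := by
        intro hmem
        have : N p ≤ 1 := hmem
        rw [hNp] at this
        linarith
      obtain ⟨f, u, hfu, hup⟩ := geometric_hahn_banach_closed_point hBconv hBclosed hpB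
      have h0B : (0 : Fin d → ℝ) ∈ B := by
        show N 0 ≤ 1
        rw [hN.zero']; exact zero_le_one
      have hu : 0 < u := by
        have := hfu 0 h0B
        simpa using this
      -- represent f by a vector
      have hrep : ∀ z : Fin d → ℝ, f z = ∑ i, z i * f (fun j => if i = j then (1:ℝ) else 0) := by
        intro z
        conv_lhs => rw [pi_eq_sum_univ z]
        rw [map_sum]
        refine Finset.sum_congr rfl fun i _ => ?_
        rw [map_smul, smul_eq_mul]
      set y : Fin d → ℝ := fun i => u⁻¹ * f (fun j => if i = j then (1:ℝ) else 0) with hy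
      have hdot : ∀ z : Fin d → ℝ, dot z y = u⁻¹ * f z := by
        intro z
        rw [hrep z, Finset.mul_sum]
        refine Finset.sum_congr rfl fun i _ => ?_
        rw [hy]
        ring
      have hy1 : dualNorm N y ≤ 1 := by
        apply Real.sSup_le _ zero_le_one
        rintro r ⟨z, hz, rfl⟩
        rw [hdot z, inv_mul_le_iff₀ hu, mul_one]
        exact (hfu z hz).le
      have hfp : u < ((1 + δ) * s⁻¹) * f x := by
        have : f p = ((1 + δ) * s⁻¹) * f x := by
          rw [hp, map_smul, smul_eq_mul]
        rw [← this]
        exact hup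
      have hux : u * s < (1 + δ) * f x := by
        have h5 := mul_lt_mul_of_pos_right hfp hs
        calc u * s < (1 + δ) * s⁻¹ * f x * s := h5
          _ = (1 + δ) * f x * (s⁻¹ * s) := by ring
          _ = (1 + δ) * f x := by rw [inv_mul_cancel₀ hs.ne', mul_one]
      have hgoal : s / (1 + δ) ≤ dot y x := by
        rw [dot_comm y x, hdot x]
        rw [div_le_iff₀ (by positivity : (0:ℝ) < 1 + δ), ← mul_le_mul_iff_right₀ hu]
        have heq : u * (u⁻¹ * f x * (1 + δ)) = f x * (1 + δ) := by
          rw [← mul_assoc, ← mul_assoc, mul_inv_cancel₀ hu.ne', one_mul]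
        rw [heq, mul_comm (f x)]
        exact hux.le
      refine le_trans hgoal ?_
      exact le_csSup (hN.bddAbove_bidualSet hd x) ⟨y, hy1, rfl⟩

end Aux


section TopAux

variable {N : (Fin d → ℝ) → ℝ}

lemma topSet_eq (N : (Fin d → ℝ) → ℝ) (x : Fin d → ℝ) :
    {r | ∃ K : Finset (Fin d), K.card ≤ d ∧ r = N (proj K x)} =
      Set.range (fun K : Finset (Fin d) => N (proj K x)) := by
  ext r
  constructor
  · rintro ⟨K, _, rfl⟩; exact ⟨K, rfl⟩
  · rintro ⟨K, rfl⟩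
    exact ⟨K, by simpa using Finset.card_le_univ K, rfl⟩

lemma bddAbove_topSet (N : (Fin d → ℝ) → ℝ) (x : Fin d → ℝ) :
    BddAbove {r | ∃ K : Finset (Fin d), K.card ≤ d ∧ r = N (proj K x)} := by
  rw [topSet_eq]
  exact (Set.finite_range _).bddAbove

lemma proj_univ (x : Fin d → ℝ) : proj Finset.univ x = x := by
  funext i; simp [proj]

lemma proj_le_topNorm (N : (Fin d → ℝ) → ℝ) (K : Finset (Fin d)) (x : Fin d → ℝ) :
    N (proj K x) ≤ topNorm N d x :=
  le_csSup (bddAbove_topSet N x) ⟨K, by simpa using Finset.card_le_univ K, rfl⟩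

lemma le_topNorm (N : (Fin d → ℝ) → ℝ) (x : Fin d → ℝ) : N x ≤ topNorm N d x := by
  have := proj_le_topNorm N Finset.univ x
  rwa [proj_univ] at this

lemma topNorm_le {a : ℝ} (x : Fin d → ℝ) (h : ∀ K : Finset (Fin d), N (proj K x) ≤ a)
    (ha : 0 ≤ a) : topNorm N d x ≤ a := by
  apply Real.sSup_le _ ha
  rintro r ⟨K, _, rfl⟩
  exact h K

lemma proj_add (K : Finset (Fin d)) (x y : Fin d → ℝ) :
    proj K (x + y) = proj K x + proj K y := by
  funext i
  by_cases h : i ∈ K <;> simp [proj, h]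

lemma proj_smul (K : Finset (Fin d)) (c : ℝ) (x : Fin d → ℝ) :
    proj K (c • x) = c • proj K x := by
  funext i
  by_cases h : i ∈ K <;> simp [proj, h]

lemma proj_zero (K : Finset (Fin d)) : proj K (0 : Fin d → ℝ) = 0 := by
  funext i
  by_cases h : i ∈ K <;> simp [proj, h]

lemma IsNorm.topNorm_isNorm (hN : IsNorm N) : IsNorm (topNorm N d) := by
  refine ⟨fun x => le_trans (hN.1 x) (le_topNorm N x), fun x => ?_, ?_, ?_⟩
  · constructor
    · intro h
      have h1 : N x ≤ 0 := h ▸ le_topNorm N x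
      exact (hN.2.1 x).mp (le_antisymm h1 (hN.1 x))
    · rintro rfl
      refine le_antisymm (topNorm_le 0 (fun K => ?_) le_rfl) ?_
      · rw [proj_zero, hN.zero']
      · rw [← hN.zero']
        exact le_topNorm N 0
  · intro c x
    rcases eq_or_ne c 0 with rfl | hc
    · simp only [zero_smul, abs_zero, zero_mul]
      refine le_antisymm (topNorm_le 0 (fun K => ?_) le_rfl) ?_
      · rw [proj_zero, hN.zero']
      · rw [← hN.zero']
        exact le_topNorm N 0
    · have hcpos : 0 < |c| := abs_pos.mpr hc
      apply le_antisymm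
      · refine topNorm_le _ (fun K => ?_) ?_
        · rw [proj_smul, hN.2.2.1]
          exact mul_le_mul_of_nonneg_left (proj_le_topNorm N K x) hcpos.le
        · exact mul_nonneg (abs_nonneg c) (le_trans (hN.1 x) (le_topNorm N x))
      · have h1 : topNorm N d x ≤ |c|⁻¹ * topNorm N d (c • x) := by
          refine topNorm_le _ (fun K => ?_) ?_
          · have : N (proj K x) = |c|⁻¹ * N (proj K (c • x)) := by
              rw [proj_smul, hN.2.2.1, ← mul_assoc, inv_mul_cancel₀ hcpos.ne', one_mul]
            rw [this]
            exact mul_le_mul_of_nonneg_left (proj_le_topNorm N K (c • x)) (by positivity)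
          · have := le_trans (hN.1 (c • x)) (le_topNorm N (c • x))
            positivity
        calc |c| * topNorm N d x ≤ |c| * (|c|⁻¹ * topNorm N d (c • x)) :=
              mul_le_mul_of_nonneg_left h1 hcpos.le
          _ = topNorm N d (c • x) := by
              rw [← mul_assoc, mul_inv_cancel₀ hcpos.ne', one_mul]
  · intro x y
    refine topNorm_le _ (fun K => ?_) ?_
    · rw [proj_add]
      calc N (proj K x + proj K y) ≤ N (proj K x) + N (proj K y) := hN.2.2.2 _ _
        _ ≤ topNorm N d x + topNorm N d y :=
            add_le_add (proj_le_topNorm N K x) (proj_le_topNorm N K y)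
    · have h1 := le_trans (hN.1 x) (le_topNorm N x)
      have h2 := le_trans (hN.1 y) (le_topNorm N y)
      linarith

lemma OrthantMonotonic.proj_le (hOM : OrthantMonotonic N) (K : Finset (Fin d))
    (x : Fin d → ℝ) : N (proj K x) ≤ N x := by
  apply hOM
  · intro i
    by_cases h : i ∈ K <;> simp [proj, h, abs_nonneg]
  · intro i
    by_cases h : i ∈ K <;> simp [proj, h, mul_self_nonneg]

lemma update_le_of_proj_le (hN : IsNorm N)
    (hproj : ∀ (K : Finset (Fin d)) (z : Fin d → ℝ), N (proj K z) ≤ N z)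
    (g : Fin d → ℝ) (a : Fin d) (u : ℝ)
    (h1 : |u| ≤ |g a|) (h2 : 0 ≤ u * g a) : N (Function.update g a u) ≤ N g := by
  classical
  have hup : Function.update g a 0 = proj (Finset.univ.erase a) g := by
    funext i
    by_cases hi : i = a
    · subst hi
      simp [Function.update_self, proj]
    · simp [Function.update_of_ne hi, proj, Finset.mem_erase, hi]
  rcases eq_or_ne (g a) 0 with h0 | h0
  · have hu0 : u = 0 := by
      rw [h0, abs_zero] at h1
      exact abs_eq_zero.mp (le_antisymm h1 (abs_nonneg u))
    subst hu0
    rw [hup]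
    exact hproj _ _
  · set t : ℝ := u / g a with ht
    have ht0 : 0 ≤ t := by
      have : t = u * g a / (g a * g a) := by
        rw [ht, div_eq_div_iff h0 (mul_ne_zero h0 h0)]
        ring
      rw [this]
      exact div_nonneg h2 (mul_self_nonneg _)
    have ht1 : t ≤ 1 := by
      have habs : |t| ≤ 1 := by
        rw [ht, abs_div]
        rw [div_le_one (abs_pos.mpr h0)]
        exact h1
      exact le_trans (le_abs_self t) habs
    have key : Function.update g a u = t • g + (1 - t) • proj (Finset.univ.erase a) g := by
      funext i
      by_cases hi : i = a
      · subst hi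
        simp only [Function.update_self, Pi.add_apply, Pi.smul_apply, smul_eq_mul, proj,
          Finset.mem_erase, ne_eq, not_true_eq_false, false_and, if_false]
        rw [ht, div_mul_cancel₀ _ h0]
        ring
      · simp only [Function.update_of_ne hi, Pi.add_apply, Pi.smul_apply, smul_eq_mul, proj,
          Finset.mem_erase, ne_eq, hi, not_false_eq_true, true_and, Finset.mem_univ, if_true]
        ring
    rw [key]
    calc N (t • g + (1 - t) • proj (Finset.univ.erase a) g)
        ≤ t * N g + (1 - t) * N (proj (Finset.univ.erase a) g) := hN.convex' _ _ ht0 ht1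
      _ ≤ t * N g + (1 - t) * N g :=
          add_le_add le_rfl (mul_le_mul_of_nonneg_left (hproj _ _) (by linarith))
      _ = N g := by ring

lemma orthantMonotonic_of_proj_le (hN : IsNorm N)
    (hproj : ∀ (K : Finset (Fin d)) (z : Fin d → ℝ), N (proj K z) ≤ N z) :
    OrthantMonotonic N := by
  classical
  intro x x' hle hsign
  have main : ∀ S : Finset (Fin d), N (fun i => if i ∈ S then x i else x' i) ≤ N x' := by
    intro S
    induction S using Finset.induction_on with
    | empty => simp
    | @insert a S ha ih =>
        have heq : (fun i => if i ∈ insert a S then x i else x' i)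
            = Function.update (fun i => if i ∈ S then x i else x' i) a (x a) := by
          funext i
          by_cases hi : i = a
          · subst hi
            simp [Finset.mem_insert]
          · simp [Finset.mem_insert, hi, Function.update_of_ne hi]
        rw [heq]
        refine le_trans (update_le_of_proj_le hN hproj _ a (x a) ?_ ?_) ih
        · simp only [ha, if_neg ha]
          exact hle a
        · simp only [ha, if_neg ha]
          exact hsign a
  have := main Finset.univ
  simpa using this

end TopAux

/-- a norm is orthant-monotonic iff it coincides with its
generalized top-d norm, iff its dual norm coincides with the generalized
d-support norm. -/
theorem orthantMonotonic_iff_eq_topNorm_d_iff_dual_eq_supportNorm_d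
    (hd : 0 < d) (N : (Fin d → ℝ) → ℝ) (hN : IsNorm N) :
    (OrthantMonotonic N ↔ ∀ x : Fin d → ℝ, N x = topNorm N d x) ∧
    (OrthantMonotonic N ↔ ∀ y : Fin d → ℝ, dualNorm N y = supportNorm N d y) := by
  have iff1 : OrthantMonotonic N ↔ ∀ x : Fin d → ℝ, N x = topNorm N d x := by
    constructor
    · intro hOM x
      exact le_antisymm (le_topNorm N x) (topNorm_le x (fun K => hOM.proj_le K x) (hN.1 x))
    · intro hT
      apply orthantMonotonic_of_proj_le hN
      intro K z
      calc N (proj K z) ≤ topNorm N d z := proj_le_topNorm N K z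
        _ = N z := (hT z).symm
  refine ⟨iff1, ?_⟩
  constructor
  · intro hOM
    have hfun : N = topNorm N d := funext (iff1.mp hOM)
    intro y
    show dualNorm N y = dualNorm (topNorm N d) y
    rw [← hfun]
  · intro hdual
    apply iff1.mpr
    have hfun : dualNorm N = dualNorm (topNorm N d) := funext hdual
    have hT : IsNorm (topNorm N d) := hN.topNorm_isNorm
    intro x
    calc N x = dualNorm (dualNorm N) x := (hN.bidual hd x).symm
      _ = dualNorm (dualNorm (topNorm N d)) x := by rw [hfun]
      _ = topNorm N d x := hT.bidual hd x

end OSMPaper
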